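/- If a node of the tree representation of a saturated structure S has degree d ≥ 2c+1 over an alphabet with c complementary pairs, then for every sequence w compatible with S, two of the d relevant positions carry the same letter, and swapping their partners yields an alternative structure with the same number of base pairs; hence S has no design. -/
import Mathlib


open scoped Classical

/-- An RNA nucleotide. -/
inductive Base | A | U | C | G
deriving DecidableEq, Inhabited, Repr

/-- The Watson-Crick pairing relation (only G-C and A-U pairs allowed). -/
def wcPair : Base → Base → Prop
  | .G, .C => True | .C, .G => True
  | .A, .U => True | .U, .A => True
  | _, _ => False

/-- The Nussinov-Jacobson pairing relation (G-C, A-U and G-U pairs allowed). -/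
def njPair : Base → Base → Prop
  | .G, .C => True | .C, .G => True
  | .A, .U => True | .U, .A => True
  | .G, .U => True | .U, .G => True
  | _, _ => False

/-- An RNA (pseudoknot-free) secondary structure, 0-indexed positions. -/
structure SecStr where
  len : ℕ
  pairs : Finset (ℕ × ℕ)
  lt : ∀ p ∈ pairs, p.1 < p.2
  ub : ∀ p ∈ pairs, p.2 < len
  once : ∀ p ∈ pairs, ∀ q ∈ pairs, p ≠ q →
    p.1 ≠ q.1 ∧ p.1 ≠ q.2 ∧ p.2 ≠ q.1 ∧ p.2 ≠ q.2
  noncross : ∀ p ∈ pairs, ∀ q ∈ pairs,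
    ¬ (p.1 < q.1 ∧ q.1 < p.2 ∧ p.2 < q.2)

def SecStr.pairedAt (S : SecStr) (i : ℕ) : Prop := ∃ p ∈ S.pairs, p.1 = i ∨ p.2 = i
def SecStr.unpairedAt (S : SecStr) (i : ℕ) : Prop := i < S.len ∧ ¬ S.pairedAt i
def SecStr.saturated (S : SecStr) : Prop := ∀ i < S.len, S.pairedAt i

/-- A structure is compatible with a sequence `w` (w.r.t. pairing relation `R`)
if it has the right length and all base pairs are `R`-valid. -/
def compat {α : Type*} [Inhabited α] (R : α → α → Prop) (w : List α) (S : SecStr) : Prop :=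
  S.len = w.length ∧ ∀ p ∈ S.pairs, R (w.getD p.1 default) (w.getD p.2 default)

/-- Base-pair-sum free energy of a structure on a sequence. -/
noncomputable def energy {α : Type*} [Inhabited α] (E : α → α → ℝ) (w : List α)
    (S : SecStr) : ℝ :=
  ∑ p ∈ S.pairs, E (w.getD p.1 default) (w.getD p.2 default)

/-- `w` is a Δ-design for `S`: `S` is compatible with `w`, and every other
compatible structure has energy at least `energy E w S + Δ`. -/
def isDesign {α : Type*} [Inhabited α] (R : α → α → Prop) (E : α → α → ℝ) (Δ : ℝ)
    (w : List α) (S : SecStr) : Prop :=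
  compat R w S ∧ ∀ S' : SecStr, compat R w S' → S' ≠ S →
    energy E w S' ≥ energy E w S + Δ

/- Tree representation machinery. -/
def encloses (q p : ℕ × ℕ) : Prop := q.1 < p.1 ∧ p.2 < q.2
def SecStr.hasParent (S : SecStr) (p : ℕ × ℕ) : Prop := ∃ q ∈ S.pairs, encloses q p
def SecStr.isParentOf (S : SecStr) (q p : ℕ × ℕ) : Prop :=
  q ∈ S.pairs ∧ p ∈ S.pairs ∧ encloses q p ∧ ¬ ∃ m ∈ S.pairs, encloses q m ∧ encloses m p

/-- Degree of a paired node: number of paired children plus one for the parent (if any). -/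
noncomputable def SecStr.pairDeg (S : SecStr) (p : ℕ × ℕ) : ℕ :=
  (S.pairs.filter (fun c => S.isParentOf p c)).card + (if S.hasParent p then 1 else 0)
/-- Degree of the virtual root: number of top-level base pairs. -/
noncomputable def SecStr.rootDeg (S : SecStr) : ℕ :=
  (S.pairs.filter (fun p => ¬ S.hasParent p)).card
/-- All nodes of the tree representation (including the virtual root) have degree ≤ d. -/
def SecStr.degLE (S : SecStr) (d : ℕ) : Prop :=
  S.rootDeg ≤ d ∧ ∀ p ∈ S.pairs, S.pairDeg p ≤ d

/-- A sequence is saturable if a saturated structure is compatible with it. -/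
def saturable {α : Type*} [Inhabited α] (R : α → α → Prop) (w : List α) : Prop :=
  ∃ S : SecStr, compat R w S ∧ S.saturated
/-- Atomic saturable: saturable, and no (nonempty) proper prefix is saturable. -/
def atomicSaturable {α : Type*} [Inhabited α] (R : α → α → Prop) (w : List α) : Prop :=
  saturable R w ∧ ∀ k, 0 < k → k < w.length → ¬ saturable R (w.take k)

/- Motifs. -/
def SecStr.unpChildOfPair (S : SecStr) (q : ℕ × ℕ) (u : ℕ) : Prop :=
  S.unpairedAt u ∧ q.1 < u ∧ u < q.2 ∧
    ¬ ∃ m ∈ S.pairs, q.1 < m.1 ∧ m.1 < u ∧ u < m.2 ∧ m.2 < q.2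
def SecStr.unpChildOfRoot (S : SecStr) (u : ℕ) : Prop :=
  S.unpairedAt u ∧ ¬ ∃ m ∈ S.pairs, m.1 < u ∧ u < m.2
/-- Motif m₅ : a tree node (possibly the root) of degree greater than four. -/
def hasM5 (S : SecStr) : Prop := 4 < S.rootDeg ∨ ∃ p ∈ S.pairs, 4 < S.pairDeg p
/-- Motif m₃∘ : a node with an unpaired child and degree greater than two. -/
def hasM3o (S : SecStr) : Prop :=
  (∃ q ∈ S.pairs, (∃ u, S.unpChildOfPair q u) ∧ 2 < S.pairDeg q) ∨
  ((∃ u, S.unpChildOfRoot u) ∧ 2 < S.rootDeg)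

/- Colorings of the tree representation. -/
inductive Col | black | white | gray
deriving DecidableEq

noncomputable def childCount (S : SecStr) (col : ℕ × ℕ → Col) (q : ℕ × ℕ) (c : Col) : ℕ :=
  (S.pairs.filter (fun p => S.isParentOf q p ∧ col p = c)).card
noncomputable def rootChildCount (S : SecStr) (col : ℕ × ℕ → Col) (c : Col) : ℕ :=
  (S.pairs.filter (fun p => ¬ S.hasParent p ∧ col p = c)).card

/-- A proper coloring of the tree representation. -/
def properCol (S : SecStr) (col : ℕ × ℕ → Col) : Prop :=
  rootChildCount S col .black ≤ 1 ∧ rootChildCount S col .white ≤ 1 ∧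
  rootChildCount S col .gray ≤ 2 ∧
  ∀ q ∈ S.pairs,
    childCount S col q .black ≤ 1 ∧ childCount S col q .white ≤ 1 ∧
    childCount S col q .gray ≤ 2 ∧
    childCount S col q (col q) ≤ 1 ∧
    (col q = .black → ∀ p ∈ S.pairs, S.isParentOf q p → col p ≠ .white) ∧
    (col q = .white → ∀ p ∈ S.pairs, S.isParentOf q p → col p ≠ .black)

/-- Level of a paired node: #black minus #white on the path to the root (incl. itself). -/
noncomputable def pairLvl (S : SecStr) (col : ℕ × ℕ → Col) (p : ℕ × ℕ) : ℤ :=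
  ((S.pairs.filter (fun q => q.1 ≤ p.1 ∧ p.2 ≤ q.2 ∧ col q = .black)).card : ℤ) -
  ((S.pairs.filter (fun q => q.1 ≤ p.1 ∧ p.2 ≤ q.2 ∧ col q = .white)).card : ℤ)
/-- Level of an unpaired node. -/
noncomputable def unpLvl (S : SecStr) (col : ℕ × ℕ → Col) (u : ℕ) : ℤ :=
  ((S.pairs.filter (fun q => q.1 < u ∧ u < q.2 ∧ col q = .black)).card : ℤ) -
  ((S.pairs.filter (fun q => q.1 < u ∧ u < q.2 ∧ col q = .white)).card : ℤ)

/-- Separated coloring: gray-node levels and unpaired-node levels are disjoint. -/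
def separatedCol (S : SecStr) (col : ℕ × ℕ → Col) : Prop :=
  ∀ p ∈ S.pairs, col p = .gray → ∀ u, S.unpairedAt u →
    pairLvl S col p ≠ unpLvl S col u

/-- A bipartite energy model: its compatibility graph is bipartite. -/
def Bipartite {α : Type*} (R : α → α → Prop) : Prop :=
  ∃ f : α → Bool, ∀ a b, R a b → f a ≠ f b

/-- The k-stutter of a sequence. -/
def stutterSeq {α : Type*} (w : List α) (k : ℕ) : List α :=
  w.flatMap (fun a => List.replicate k a)
/-- The base pairs of the k-stutter of a structure. -/
def stutterPairs (S : SecStr) (k : ℕ) : Finset (ℕ × ℕ) :=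
  S.pairs.biUnion (fun p => (Finset.range k).image
    (fun m => (k * p.1 + m, k * p.2 + (k - 1 - m))))

/-- Two base pairs belong to the same band (maximal stack) of S. -/
def sameBand (S : SecStr) (p p' : ℕ × ℕ) : Prop :=
  p ∈ S.pairs ∧ p' ∈ S.pairs ∧ p.1 + p.2 = p'.1 + p'.2 ∧
  ∀ x, min p.1 p'.1 ≤ x → x ≤ max p.1 p'.1 → (x, p.1 + p.2 - x) ∈ S.pairs

/-- Nussinov-Jacobson energies: a for G-C, b for A-U, g for G-U. -/
def njE (a b g : ℝ) : Base → Base → ℝ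
  | .G, .C => a | .C, .G => a
  | .A, .U => b | .U, .A => b
  | .G, .U => g | .U, .G => g
  | _, _ => 0

/-- level of position i : #G minus #C in the prefix of w ending at i. -/
def lvl (w : List Base) (i : ℕ) : ℤ :=
  ((w.take (i+1)).count Base.G : ℤ) - ((w.take (i+1)).count Base.C : ℤ)

/- ===== Auxiliary lemmas for Statement 11 ===== -/
set_option maxHeartbeats 1000000

private lemma sep' (S : SecStr) {p q : ℕ × ℕ} (hp : p ∈ S.pairs) (hq : q ∈ S.pairs)
    (hne : p ≠ q) :
    p.2 < q.1 ∨ q.2 < p.1 ∨ (p.1 < q.1 ∧ q.2 < p.2) ∨ (q.1 < p.1 ∧ p.2 < q.2) := by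
  have h1 := S.lt p hp
  have h2 := S.lt q hq
  have h3 := S.once p hp q hq hne
  have h4 := S.noncross p hp q hq
  have h5 := S.noncross q hq p hp
  omega

/-- The generic swap construction: replace pairs `p, q` by `n1, n2` using the same
four endpoints, assuming no other arc crosses the new arcs. -/
private lemma swap_construct (S : SecStr) (p q n1 n2 : ℕ × ℕ)
    (hp : p ∈ S.pairs) (hq : q ∈ S.pairs) (hpq : p ≠ q)
    (h1 : n1.1 < n1.2) (h2 : n2.1 < n2.2)
    (hends : ∀ x, (x = n1.1 ∨ x = n1.2 ∨ x = n2.1 ∨ x = n2.2) ↔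
        (x = p.1 ∨ x = p.2 ∨ x = q.1 ∨ x = q.2))
    (hd : n1.1 ≠ n2.1 ∧ n1.1 ≠ n2.2 ∧ n1.2 ≠ n2.1 ∧ n1.2 ≠ n2.2)
    (hn1p : n1 ≠ p) (hn1q : n1 ≠ q) (hn2p : n2 ≠ p) (hn2q : n2 ≠ q)
    (hmid : ∀ m ∈ S.pairs, m ≠ p → m ≠ q →
      (¬(m.1 < n1.1 ∧ n1.1 < m.2 ∧ m.2 < n1.2) ∧ ¬(n1.1 < m.1 ∧ m.1 < n1.2 ∧ n1.2 < m.2)) ∧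
      (¬(m.1 < n2.1 ∧ n2.1 < m.2 ∧ m.2 < n2.2) ∧ ¬(n2.1 < m.1 ∧ m.1 < n2.2 ∧ n2.2 < m.2)))
    (hnc : ¬(n1.1 < n2.1 ∧ n2.1 < n1.2 ∧ n1.2 < n2.2) ∧
           ¬(n2.1 < n1.1 ∧ n1.1 < n2.2 ∧ n2.2 < n1.2)) :
    ∃ S' : SecStr,
      S'.pairs = insert n1 (insert n2 ((S.pairs.erase p).erase q)) ∧
      S'.len = S.len ∧ S'.pairs.card = S.pairs.card ∧ S' ≠ S := by
  have hltp := S.lt p hp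
  have hltq := S.lt q hq
  have honcepq := S.once p hp q hq hpq
  have hn1new : n1 ∉ S.pairs := by
    intro h
    have o1 := S.once n1 h p hp hn1p
    have o2 := S.once n1 h q hq hn1q
    have e1 := (hends n1.1).mp (Or.inl rfl)
    omega
  have hn2new : n2 ∉ S.pairs := by
    intro h
    have o1 := S.once n2 h p hp hn2p
    have o2 := S.once n2 h q hq hn2q
    have e1 := (hends n2.1).mp (Or.inr (Or.inr (Or.inl rfl)))
    omega
  have hub : ∀ x, (x = p.1 ∨ x = p.2 ∨ x = q.1 ∨ x = q.2) → x < S.len := by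
    have u1 := S.ub p hp
    have u2 := S.ub q hq
    omega
  set P : Finset (ℕ × ℕ) := insert n1 (insert n2 ((S.pairs.erase p).erase q)) with hP
  have hmem : ∀ r, r ∈ P ↔ r = n1 ∨ r = n2 ∨ (r ∈ S.pairs ∧ r ≠ p ∧ r ≠ q) := by
    intro r
    simp only [hP, Finset.mem_insert, Finset.mem_erase]
    tauto
  refine ⟨⟨S.len, P, ?_, ?_, ?_, ?_⟩, rfl, rfl, ?_, ?_⟩
  · -- lt
    intro r hr
    rcases (hmem r).mp hr with h | h | h
    · subst h; exact h1
    · subst h; exact h2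
    · exact S.lt r h.1
  · -- ub
    intro r hr
    rcases (hmem r).mp hr with h | h | h
    · subst h; exact hub r.2 ((hends r.2).mp (Or.inr (Or.inl rfl)))
    · subst h; exact hub r.2 ((hends r.2).mp (Or.inr (Or.inr (Or.inr rfl))))
    · exact S.ub r h.1
  · -- once
    intro r hr r' hr' hne
    rcases (hmem r).mp hr with h | h | h <;> rcases (hmem r').mp hr' with h' | h' | h'
    · exact absurd (h.trans h'.symm) hne
    · subst h; subst h'; omega
    · subst h
      have o1 := S.once r' h'.1 p hp h'.2.1
      have o2 := S.once r' h'.1 q hq h'.2.2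
      have e1 := (hends r.1).mp (Or.inl rfl)
      have e2 := (hends r.2).mp (Or.inr (Or.inl rfl))
      omega
    · subst h; subst h'; omega
    · exact absurd (h.trans h'.symm) hne
    · subst h
      have o1 := S.once r' h'.1 p hp h'.2.1
      have o2 := S.once r' h'.1 q hq h'.2.2
      have e1 := (hends r.1).mp (Or.inr (Or.inr (Or.inl rfl)))
      have e2 := (hends r.2).mp (Or.inr (Or.inr (Or.inr rfl)))
      omega
    · subst h'
      have o1 := S.once r h.1 p hp h.2.1
      have o2 := S.once r h.1 q hq h.2.2
      have e1 := (hends r'.1).mp (Or.inl rfl)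
      have e2 := (hends r'.2).mp (Or.inr (Or.inl rfl))
      omega
    · subst h'
      have o1 := S.once r h.1 p hp h.2.1
      have o2 := S.once r h.1 q hq h.2.2
      have e1 := (hends r'.1).mp (Or.inr (Or.inr (Or.inl rfl)))
      have e2 := (hends r'.2).mp (Or.inr (Or.inr (Or.inr rfl)))
      omega
    · exact S.once r h.1 r' h'.1 hne
  · -- noncross
    intro r hr r' hr'
    rcases (hmem r).mp hr with h | h | h <;> rcases (hmem r').mp hr' with h' | h' | h'
    · subst h; subst h'; omega
    · subst h; subst h'; exact hnc.1
    · subst h; exact (hmid r' h'.1 h'.2.1 h'.2.2).1.2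
    · subst h; subst h'; exact hnc.2
    · subst h; subst h'; omega
    · subst h; exact (hmid r' h'.1 h'.2.1 h'.2.2).2.2
    · subst h'; exact (hmid r h.1 h.2.1 h.2.2).1.1
    · subst h'; exact (hmid r h.1 h.2.1 h.2.2).2.1
    · exact S.noncross r h.1 r' h'.1
  · -- card
    have hqe : q ∈ S.pairs.erase p := Finset.mem_erase.mpr ⟨Ne.symm hpq, hq⟩
    have c1 : (S.pairs.erase p).card = S.pairs.card - 1 := Finset.card_erase_of_mem hp
    have c2 : ((S.pairs.erase p).erase q).card = (S.pairs.erase p).card - 1 :=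
      Finset.card_erase_of_mem hqe
    have hpos1 : 0 < S.pairs.card := Finset.card_pos.mpr ⟨p, hp⟩
    have hpos2 : 0 < (S.pairs.erase p).card := Finset.card_pos.mpr ⟨q, hqe⟩
    have hn12 : n1 ≠ n2 := fun h => hd.1 (by rw [h])
    have hn2E : n2 ∉ (S.pairs.erase p).erase q :=
      fun h => hn2new (Finset.mem_of_mem_erase (Finset.mem_of_mem_erase h))
    have hn1E : n1 ∉ insert n2 ((S.pairs.erase p).erase q) := by
      simp only [Finset.mem_insert]
      rintro (h | h)
      · exact hn12 h
      · exact hn1new (Finset.mem_of_mem_erase (Finset.mem_of_mem_erase h))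
    show P.card = S.pairs.card
    rw [hP, Finset.card_insert_of_notMem hn1E, Finset.card_insert_of_notMem hn2E, c2, c1]
    omega
  · -- ne
    intro hEq
    apply hn1new
    have : n1 ∈ P := Finset.mem_insert_self _ _
    rw [show P = S.pairs from congrArg SecStr.pairs hEq] at this
    exact this

/-- Swap two sibling (non-nested, same-ancestors) arcs. -/
private lemma swap_sib (S : SecStr) {p q : ℕ × ℕ}
    (hp : p ∈ S.pairs) (hq : q ∈ S.pairs) (hord : p.2 < q.1)
    (Hpq : ∀ m ∈ S.pairs, encloses m p ↔ encloses m q) :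
    ∃ S' : SecStr,
      S'.pairs = insert (p.1, q.2) (insert (p.2, q.1) ((S.pairs.erase p).erase q)) ∧
      S'.len = S.len ∧ S'.pairs.card = S.pairs.card ∧ S' ≠ S := by
  have hltp := S.lt p hp
  have hltq := S.lt q hq
  have hne : p ≠ q := by intro h; rw [h] at hord; omega
  apply swap_construct S p q (p.1, q.2) (p.2, q.1) hp hq hne
  · show p.1 < q.2; omega
  · show p.2 < q.1; omega
  · intro x
    show (x = p.1 ∨ x = q.2 ∨ x = p.2 ∨ x = q.1) ↔ (x = p.1 ∨ x = p.2 ∨ x = q.1 ∨ x = q.2)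
    tauto
  · show p.1 ≠ p.2 ∧ p.1 ≠ q.1 ∧ q.2 ≠ p.2 ∧ q.2 ≠ q.1
    omega
  · intro h; have h2 : q.2 = p.2 := (by rw [← h]); omega
  · intro h; have h2 : p.1 = q.1 := (by rw [← h]); omega
  · intro h; have h2 : q.1 = p.2 := (by rw [← h]); omega
  · intro h; have h2 : p.2 = q.1 := (by rw [← h]); omega
  · intro m hm hmp hmq
    have s1 := sep' S hm hp hmp
    have s2 := sep' S hm hq hmq
    have hiff := Hpq m hm
    unfold encloses at hiff
    have hltm := S.lt m hm
    have o1 := S.once m hm p hp hmp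
    have o2 := S.once m hm q hq hmq
    show (¬(m.1 < p.1 ∧ p.1 < m.2 ∧ m.2 < q.2) ∧ ¬(p.1 < m.1 ∧ m.1 < q.2 ∧ q.2 < m.2)) ∧
         (¬(m.1 < p.2 ∧ p.2 < m.2 ∧ m.2 < q.1) ∧ ¬(p.2 < m.1 ∧ m.1 < q.1 ∧ q.1 < m.2))
    omega
  · show ¬(p.1 < p.2 ∧ p.2 < q.2 ∧ q.2 < q.1) ∧ ¬(p.2 < p.1 ∧ p.1 < q.1 ∧ q.1 < q.2)
    omega

/-- Swap a parent arc with one of its (immediate) children. -/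
private lemma swap_par (S : SecStr) {p q : ℕ × ℕ} (hpar : S.isParentOf p q) :
    ∃ S' : SecStr,
      S'.pairs = insert (p.1, q.1) (insert (q.2, p.2) ((S.pairs.erase p).erase q)) ∧
      S'.len = S.len ∧ S'.pairs.card = S.pairs.card ∧ S' ≠ S := by
  obtain ⟨hp, hq, henc, hnomid⟩ := hpar
  obtain ⟨he1, he2⟩ := henc
  have hltp := S.lt p hp
  have hltq := S.lt q hq
  have hne : p ≠ q := by intro h; rw [h] at he1; omega
  apply swap_construct S p q (p.1, q.1) (q.2, p.2) hp hq hne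
  · show p.1 < q.1; omega
  · show q.2 < p.2; omega
  · intro x
    show (x = p.1 ∨ x = q.1 ∨ x = q.2 ∨ x = p.2) ↔ (x = p.1 ∨ x = p.2 ∨ x = q.1 ∨ x = q.2)
    tauto
  · show p.1 ≠ q.2 ∧ p.1 ≠ p.2 ∧ q.1 ≠ q.2 ∧ q.1 ≠ p.2
    omega
  · intro h; have h2 : q.1 = p.2 := (by rw [← h]); omega
  · intro h; have h2 : p.1 = q.1 := (by rw [← h]); omega
  · intro h; have h2 : q.2 = p.1 := (by rw [← h]); omega
  · intro h; have h2 : p.2 = q.2 := (by rw [← h]); omega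
  · intro m hm hmp hmq
    have s1 := sep' S hm hp hmp
    have s2 := sep' S hm hq hmq
    have hno : ¬ (encloses p m ∧ encloses m q) := fun h => hnomid ⟨m, hm, h.1, h.2⟩
    unfold encloses at hno
    have hltm := S.lt m hm
    have o1 := S.once m hm p hp hmp
    have o2 := S.once m hm q hq hmq
    show (¬(m.1 < p.1 ∧ p.1 < m.2 ∧ m.2 < q.1) ∧ ¬(p.1 < m.1 ∧ m.1 < q.1 ∧ q.1 < m.2)) ∧
         (¬(m.1 < q.2 ∧ q.2 < m.2 ∧ m.2 < p.2) ∧ ¬(q.2 < m.1 ∧ m.1 < p.2 ∧ p.2 < m.2))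
    omega
  · show ¬(p.1 < q.2 ∧ q.2 < q.1 ∧ q.1 < p.2) ∧ ¬(q.2 < p.1 ∧ p.1 < p.2 ∧ p.2 < q.1)
    omega

/-- An arc enclosing one child of a node encloses every child of that node. -/
private lemma child_encl (S : SecStr) {v p q m : ℕ × ℕ}
    (hvp : S.isParentOf v p) (hvq : S.isParentOf v q)
    (hm : m ∈ S.pairs) (hmp : encloses m p) : encloses m q := by
  obtain ⟨hv, hp, hep, hnp⟩ := hvp
  obtain ⟨-, hq, heq, hnq⟩ := hvq
  have l1 := S.lt p hp
  have l2 := S.lt q hq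
  have l3 := S.lt v hv
  have l4 := S.lt m hm
  by_cases hmv : m = v
  · subst hmv; exact heq
  · have s := sep' S hm hv hmv
    unfold encloses at *
    rcases s with h | h | h | h
    · omega
    · omega
    · exact ⟨by omega, by omega⟩
    · exact absurd ⟨m, hm, ⟨h.1, h.2⟩, hmp⟩ hnp

section KeyLemma

variable {c : ℕ} [inst : Inhabited (Fin (2 * c))]

private abbrev Rc (c : ℕ) : Fin (2 * c) → Fin (2 * c) → Prop :=
  fun x y => x.val / 2 = y.val / 2 ∧ x ≠ y

/-- Sibling swap preserves compatibility when the two left letters agree. -/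
private lemma sib_result_ord (S : SecStr) (w : List (Fin (2 * c)))
    (hw : compat (Rc c) w S) {p q : ℕ × ℕ}
    (hp : p ∈ S.pairs) (hq : q ∈ S.pairs) (hord : p.2 < q.1)
    (Hpq : ∀ m ∈ S.pairs, encloses m p ↔ encloses m q)
    (hlet : w.getD p.1 default = w.getD q.1 default) :
    ∃ S' : SecStr, compat (Rc c) w S' ∧ S' ≠ S ∧ S'.pairs.card = S.pairs.card := by
  obtain ⟨S', hpairs, hlen, hcard, hne⟩ := swap_sib S hp hq hord Hpq
  have c1 := hw.2 p hp
  have c2 := hw.2 q hq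
  refine ⟨S', ⟨by rw [hlen]; exact hw.1, ?_⟩, hne, hcard⟩
  intro r hr
  rw [hpairs] at hr
  rcases Finset.mem_insert.mp hr with h | h
  · subst h
    refine ⟨?_, ?_⟩
    · show (w.getD p.1 default).val / 2 = (w.getD q.2 default).val / 2
      rw [hlet]; exact c2.1
    · show w.getD p.1 default ≠ w.getD q.2 default
      rw [hlet]; exact c2.2
  rcases Finset.mem_insert.mp h with h | h
  · subst h
    refine ⟨?_, ?_⟩
    · show (w.getD p.2 default).val / 2 = (w.getD q.1 default).val / 2
      rw [← hlet]; exact c1.1.symm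
    · show w.getD p.2 default ≠ w.getD q.1 default
      intro h'; exact c1.2 (hlet.trans h'.symm)
  · exact hw.2 r (Finset.mem_of_mem_erase (Finset.mem_of_mem_erase h))

private lemma sib_result (S : SecStr) (w : List (Fin (2 * c)))
    (hw : compat (Rc c) w S) {p q : ℕ × ℕ}
    (hp : p ∈ S.pairs) (hq : q ∈ S.pairs) (hne : p ≠ q)
    (Hpq : ∀ m ∈ S.pairs, encloses m p ↔ encloses m q)
    (hlet : w.getD p.1 default = w.getD q.1 default) :
    ∃ S' : SecStr, compat (Rc c) w S' ∧ S' ≠ S ∧ S'.pairs.card = S.pairs.card := by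
  have hnpq : ¬ encloses p q := by
    intro h
    have := (Hpq p hp).mpr h
    unfold encloses at this; omega
  have hnqp : ¬ encloses q p := by
    intro h
    have := (Hpq q hq).mp h
    unfold encloses at this; omega
  unfold encloses at hnpq hnqp
  rcases sep' S hp hq hne with h | h | h | h
  · exact sib_result_ord S w hw hp hq h Hpq hlet
  · exact sib_result_ord S w hw hq hp h (fun m hm => (Hpq m hm).symm) hlet.symm
  · omega
  · omega

/-- Parent swap preserves compatibility when the child's left letter matches the
parent's right letter. -/
private lemma par_result (S : SecStr) (w : List (Fin (2 * c)))
    (hw : compat (Rc c) w S) {p q : ℕ × ℕ}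
    (hpar : S.isParentOf p q)
    (hlet : w.getD q.1 default = w.getD p.2 default) :
    ∃ S' : SecStr, compat (Rc c) w S' ∧ S' ≠ S ∧ S'.pairs.card = S.pairs.card := by
  have hp := hpar.1
  have hq := hpar.2.1
  obtain ⟨S', hpairs, hlen, hcard, hne⟩ := swap_par S hpar
  have c1 := hw.2 p hp
  have c2 := hw.2 q hq
  refine ⟨S', ⟨by rw [hlen]; exact hw.1, ?_⟩, hne, hcard⟩
  intro r hr
  rw [hpairs] at hr
  rcases Finset.mem_insert.mp hr with h | h
  · subst h
    refine ⟨?_, ?_⟩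
    · show (w.getD p.1 default).val / 2 = (w.getD q.1 default).val / 2
      rw [hlet]; exact c1.1
    · show w.getD p.1 default ≠ w.getD q.1 default
      intro h'; exact c1.2 (h'.trans hlet)
  rcases Finset.mem_insert.mp h with h | h
  · subst h
    refine ⟨?_, ?_⟩
    · show (w.getD q.2 default).val / 2 = (w.getD p.2 default).val / 2
      rw [← hlet]; exact c2.1.symm
    · show w.getD q.2 default ≠ w.getD p.2 default
      intro h'; exact c2.2 (hlet.trans h'.symm)
  · exact hw.2 r (Finset.mem_of_mem_erase (Finset.mem_of_mem_erase h))

private lemma energy_const_neg {α : Type*} [Inhabited α] (w : List α) (S : SecStr) :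
    energy (fun _ _ => (-1 : ℝ)) w S = -(S.pairs.card : ℝ) := by
  simp [energy]

/-- The key lemma: a node of degree > 2c forces an alternative structure. -/
private lemma key (hc : 0 < c) (S : SecStr) (hdeg : ¬ S.degLE (2 * c))
    (w : List (Fin (2 * c))) (hw : compat (Rc c) w S) :
    ∃ S' : SecStr, compat (Rc c) w S' ∧ S' ≠ S ∧ S'.pairs.card = S.pairs.card := by
  have hcardU : (Finset.univ : Finset (Fin (2 * c))).card = 2 * c := by
    simp
  by_cases hR : S.rootDeg ≤ 2 * c
  · -- a paired node has degree > 2c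
    have hex : ∃ v ∈ S.pairs, 2 * c < S.pairDeg v := by
      by_contra hall
      push_neg at hall
      exact hdeg ⟨hR, fun p hp => hall p hp⟩
    obtain ⟨v, hv, hvdeg⟩ := hex
    unfold SecStr.pairDeg at hvdeg
    set C := S.pairs.filter (fun r => S.isParentOf v r) with hC
    have hmemC : ∀ r ∈ C, S.isParentOf v r := fun r hr => (Finset.mem_filter.mp hr).2
    have hmemC' : ∀ r ∈ C, r ∈ S.pairs := fun r hr => (Finset.mem_filter.mp hr).1
    by_cases hP : S.hasParent v
    · rw [if_pos hP] at hvdeg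
      by_cases hexm : ∃ r ∈ C, w.getD r.1 default = w.getD v.2 default
      · obtain ⟨r, hr, hlet⟩ := hexm
        exact par_result S w hw (hmemC r hr) hlet
      · push_neg at hexm
        have hmaps : ∀ r ∈ C, w.getD r.1 default ∈
            (Finset.univ : Finset (Fin (2 * c))).erase (w.getD v.2 default) := by
          intro r hr
          exact Finset.mem_erase.mpr ⟨hexm r hr, Finset.mem_univ _⟩
        have hcardlt : ((Finset.univ : Finset (Fin (2 * c))).erase
            (w.getD v.2 default)).card < C.card := by
          rw [Finset.card_erase_of_mem (Finset.mem_univ _), hcardU]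
          omega
        obtain ⟨p, hpC, q, hqC, hne, hlet⟩ :=
          Finset.exists_ne_map_eq_of_card_lt_of_maps_to hcardlt hmaps
        exact sib_result S w hw (hmemC' p hpC) (hmemC' q hqC) hne
          (fun m hm => ⟨child_encl S (hmemC p hpC) (hmemC q hqC) hm,
                        child_encl S (hmemC q hqC) (hmemC p hpC) hm⟩) hlet
    · rw [if_neg hP] at hvdeg
      have hmaps : ∀ r ∈ C, w.getD r.1 default ∈ (Finset.univ : Finset (Fin (2 * c))) :=
        fun r _ => Finset.mem_univ _
      have hcardlt : (Finset.univ : Finset (Fin (2 * c))).card < C.card := by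
        rw [hcardU]; omega
      obtain ⟨p, hpC, q, hqC, hne, hlet⟩ :=
        Finset.exists_ne_map_eq_of_card_lt_of_maps_to hcardlt hmaps
      exact sib_result S w hw (hmemC' p hpC) (hmemC' q hqC) hne
        (fun m hm => ⟨child_encl S (hmemC p hpC) (hmemC q hqC) hm,
                      child_encl S (hmemC q hqC) (hmemC p hpC) hm⟩) hlet
  · -- the root has degree > 2c
    push_neg at hR
    unfold SecStr.rootDeg at hR
    set T := S.pairs.filter (fun r => ¬ S.hasParent r) with hT
    have hmaps : ∀ r ∈ T, w.getD r.1 default ∈ (Finset.univ : Finset (Fin (2 * c))) :=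
      fun r _ => Finset.mem_univ _
    have hcardlt : (Finset.univ : Finset (Fin (2 * c))).card < T.card := by
      rw [hcardU]; exact hR
    obtain ⟨p, hpT, q, hqT, hne, hlet⟩ :=
      Finset.exists_ne_map_eq_of_card_lt_of_maps_to hcardlt hmaps
    have hpP := (Finset.mem_filter.mp hpT).1
    have hqP := (Finset.mem_filter.mp hqT).1
    have hpnp := (Finset.mem_filter.mp hpT).2
    have hqnp := (Finset.mem_filter.mp hqT).2
    refine sib_result S w hw hpP hqP hne (fun m hm => ?_) hlet
    constructor
    · intro h; exact absurd ⟨m, hm, h⟩ hpnp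
    · intro h; exact absurd ⟨m, hm, h⟩ hqnp

end KeyLemma

/-- if a node of a saturated structure has degree ≥ 2c+1 over an
alphabet with c complementary pairs, then every compatible sequence admits an
alternative structure with the same number of base pairs; hence S has no design. -/
theorem stmt11 (c : ℕ) (hc : 0 < c) (S : SecStr) (hsat : S.saturated)
    (hdeg : ¬ S.degLE (2 * c)) :
    (∀ w : List (Fin (2 * c)),
        @compat (Fin (2 * c)) ⟨⟨0, by omega⟩⟩
          (fun x y => x.val / 2 = y.val / 2 ∧ x ≠ y) w S →
        ∃ S' : SecStr,
          @compat (Fin (2 * c)) ⟨⟨0, by omega⟩⟩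
            (fun x y => x.val / 2 = y.val / 2 ∧ x ≠ y) w S' ∧
          S' ≠ S ∧ S'.pairs.card = S.pairs.card)
    ∧ ¬ ∃ w : List (Fin (2 * c)),
        @isDesign (Fin (2 * c)) ⟨⟨0, by omega⟩⟩
          (fun x y => x.val / 2 = y.val / 2 ∧ x ≠ y)
          (fun _ _ => (-1 : ℝ)) 1 w S := by
  constructor
  · intro w hw
    exact @key c ⟨⟨0, by omega⟩⟩ hc S hdeg w hw
  · rintro ⟨w, hcw, hmin⟩
    obtain ⟨S', hc', hne', hcard'⟩ := @key c ⟨⟨0, by omega⟩⟩ hc S hdeg w hcw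
    have h1 := hmin S' hc' hne'
    rw [@energy_const_neg (Fin (2 * c)) ⟨⟨0, by omega⟩⟩ w S',
       @energy_const_neg (Fin (2 * c)) ⟨⟨0, by omega⟩⟩ w S, hcard'] at h1
    linarith
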